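/- For k ≥ 3, the Chermak-Delgado lattice of the dihedral group D_{2^{k+1}} consists only of the cyclic subgroup ⟨a⟩ of order 2^k. -/

import Mathlib

open DihedralGroup Subgroup

/-- The Chermak–Delgado measure of a subgroup: `|H| * |C_G(H)|`. -/
noncomputable def chermakDelgadoMeasure {G : Type*} [Group G] (H : Subgroup G) : ℕ :=
  Nat.card H * Nat.card (Subgroup.centralizer (H : Set G))

section CD15

variable {k : ℕ}

private lemma cd15_neZero (k : ℕ) : NeZero ((2:ℕ)^k) := ⟨pow_ne_zero _ two_ne_zero⟩

attribute [local instance] cd15_neZero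

private lemma cd15_mem_rot (i : ZMod (2^k)) :
    r i ∈ zpowers (r (1 : ZMod (2^k))) := by
  refine ⟨(i.val : ℤ), ?_⟩
  show r 1 ^ ((i.val : ℕ) : ℤ) = r i
  rw [zpow_natCast, r_one_pow]
  simp

private lemma cd15_rot_of_mem {x : DihedralGroup (2^k)}
    (hx : x ∈ zpowers (r (1 : ZMod (2^k)))) : ∃ i, x = r i := by
  obtain ⟨z, rfl⟩ := hx
  rcases z with m | m
  · refine ⟨m, ?_⟩
    show r 1 ^ (Int.ofNat m) = r (m : ZMod (2^k))
    rw [Int.ofNat_eq_coe, zpow_natCast, r_one_pow]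
  · refine ⟨-(m+1 : ℕ), ?_⟩
    show r 1 ^ (Int.negSucc m) = r (-((m+1 : ℕ) : ZMod (2^k)))
    rw [zpow_negSucc, r_one_pow, eq_comm, eq_inv_iff_mul_eq_one, r_mul_r,
      neg_add_cancel, one_def]

private lemma cd15_two_torsion (hk : 1 ≤ k) (i : ZMod (2^k)) (h : 2 * i = 0) :
    i = 0 ∨ i = ((2^(k-1) : ℕ) : ZMod (2^k)) := by
  have hval : ((i.val : ℕ) : ZMod (2^k)) = i := by simp
  have h2 : ((2 * i.val : ℕ) : ZMod (2^k)) = 0 := by push_cast [hval]; exact h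
  rw [ZMod.natCast_eq_zero_iff] at h2
  obtain ⟨c, hc⟩ := h2
  have hlt : i.val < 2^k := ZMod.val_lt i
  have hsplit : 2^k = 2 * 2^(k-1) := by
    rw [← pow_succ']
    congr 1
    omega
  have hc2 : c < 2 := by nlinarith [Nat.pow_pos (n := k) (show 0 < 2 by norm_num)]
  interval_cases c
  · left
    have : i.val = 0 := by omega
    rw [← hval, this, Nat.cast_zero]
  · right
    have : i.val = 2^(k-1) := by omega
    rw [← hval, this]

private lemma cd15_half_ne_zero (hk : 1 ≤ k) :
    ((2^(k-1) : ℕ) : ZMod (2^k)) ≠ 0 := by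
  rw [Ne, ZMod.natCast_eq_zero_iff]
  intro h
  have := Nat.le_of_dvd (Nat.pow_pos (by norm_num)) h
  have : (2:ℕ)^(k-1) < 2^k := Nat.pow_lt_pow_right one_lt_two (by omega)
  omega

private lemma cd15_two_ne_zero (hk : 2 ≤ k) : (2 : ZMod (2^k)) ≠ 0 := by
  have : ((2 : ℕ) : ZMod (2^k)) ≠ 0 := by
    rw [Ne, ZMod.natCast_eq_zero_iff]
    intro h
    have := Nat.le_of_dvd (by norm_num) h
    have : (2:ℕ)^1 < 2^k := Nat.pow_lt_pow_right one_lt_two (by omega)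
    simp at this; omega
  simpa using this

private lemma cd15_cent_le_rot {K : Subgroup (DihedralGroup (2^k))} {i : ZMod (2^k)}
    (hi : 2 * i ≠ 0) (hiK : r i ∈ K) :
    centralizer (K : Set (DihedralGroup (2^k))) ≤ zpowers (r 1) := by
  intro g hg
  rw [mem_centralizer_iff] at hg
  have hcomm := hg (r i) hiK
  rcases g with j | j
  · exact cd15_mem_rot j
  · rw [r_mul_sr, sr_mul_r] at hcomm
    exfalso
    apply hi
    have h5 : j - i = j + i := by injection hcomm
    linear_combination -h5

private lemma cd15_card_rot : Nat.card (zpowers (r (1 : ZMod (2^k)))) = 2^k := by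
  rw [Nat.card_zpowers, orderOf_r_one]

private lemma cd15_cent_rot (hk : 2 ≤ k) :
    centralizer ((zpowers (r (1 : ZMod (2^k))) : Subgroup (DihedralGroup (2^k))) : Set (DihedralGroup (2^k)))
      = zpowers (r 1) := by
  apply le_antisymm
  · exact cd15_cent_le_rot (by simpa using cd15_two_ne_zero hk) (mem_zpowers _)
  · intro g hg
    obtain ⟨i, rfl⟩ := cd15_rot_of_mem hg
    rw [mem_centralizer_iff]
    intro h hh
    obtain ⟨j, rfl⟩ := cd15_rot_of_mem hh
    rw [r_mul_r, r_mul_r, add_comm]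

end CD15

section CD15b

variable {k : ℕ}

attribute [local instance] cd15_neZero

private lemma cd15_card_le_pair {G : Type*} [Group G] (H : Subgroup G) (a b : G)
    (h : (H : Set G) ⊆ {a, b}) : Nat.card H ≤ 2 := by
  have h1 : Nat.card H = (H : Set G).ncard := (Nat.card_coe_set_eq _).symm
  have h2 := Set.ncard_le_ncard h ((Set.finite_singleton b).insert a)
  have h3 : ({a, b} : Set G).ncard ≤ 2 := by
    refine le_trans (Set.ncard_insert_le _ _) ?_
    simp [Set.ncard_singleton]
  omega

private lemma cd15_card_le_quad {G : Type*} [Group G] (H : Subgroup G) (a b c d : G)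
    (h : (H : Set G) ⊆ {a, b, c, d}) : Nat.card H ≤ 4 := by
  have h1 : Nat.card H = (H : Set G).ncard := (Nat.card_coe_set_eq _).symm
  have h2 := Set.ncard_le_ncard h
    ((((Set.finite_singleton d).insert c).insert b).insert a)
  have h3 : ({a, b, c, d} : Set G).ncard ≤ 4 := by
    have i1 := Set.ncard_insert_le a ({b, c, d} : Set G)
    have i2 := Set.ncard_insert_le b ({c, d} : Set G)
    have i3 := Set.ncard_insert_le c ({d} : Set G)
    simp only [Set.ncard_singleton] at *
    omega
  omega

private lemma cd15_two_hh (hk : 1 ≤ k) :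
    2 * (((2^(k-1) : ℕ)) : ZMod (2^k)) = 0 := by
  have h : (2:ℕ) * 2^(k-1) = 2^k := by
    rw [← pow_succ']
    congr 1
    omega
  calc 2 * (((2^(k-1) : ℕ)) : ZMod (2^k)) = (((2 * 2^(k-1) : ℕ)) : ZMod (2^k)) := by push_cast; ring
    _ = (((2^k : ℕ)) : ZMod (2^k)) := by rw [h]
    _ = 0 := ZMod.natCast_self _

private lemma cd15_key (hk : 3 ≤ k) (K : Subgroup (DihedralGroup (2^k))) :
    chermakDelgadoMeasure K ≤ 2^k * 2^k ∧
      (chermakDelgadoMeasure K = 2^k * 2^k → K = zpowers (r 1)) := by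
  have h2hh : 2 * (((2^(k-1) : ℕ)) : ZMod (2^k)) = 0 := cd15_two_hh (by omega)
  have hneg : -(((2^(k-1) : ℕ)) : ZMod (2^k)) = (((2^(k-1) : ℕ)) : ZMod (2^k)) := by
    linear_combination -h2hh
  have hkk : (2:ℕ)^(k+2) < 2^k * 2^k := by
    rw [← pow_add]
    exact Nat.pow_lt_pow_right one_lt_two (by omega)
  have hkk4 : (16:ℕ) < 2^k * 2^k := by
    rw [← pow_add]
    calc (16:ℕ) < 2^5 := by norm_num
    _ ≤ 2^(k+k) := Nat.pow_le_pow_right (by norm_num) (by omega)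
  have hcardG : Nat.card (DihedralGroup (2^k)) = 2 * 2^k := DihedralGroup.nat_card
  have hKtop : Nat.card K ≤ 2 * 2^k := hcardG ▸ Subgroup.card_le_card_group K
  have hCtop : Nat.card (centralizer (K : Set (DihedralGroup (2^k)))) ≤ 2 * 2^k :=
    hcardG ▸ Subgroup.card_le_card_group _
  have hmeas : chermakDelgadoMeasure K
      = Nat.card K * Nat.card (centralizer (K : Set (DihedralGroup (2^k)))) := rfl
  by_cases hA : ∃ i : ZMod (2^k), 2*i ≠ 0 ∧ r i ∈ K
  · obtain ⟨i, hi2, hiK⟩ := hA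
    have hC : centralizer (K : Set (DihedralGroup (2^k))) ≤ zpowers (r 1) :=
      cd15_cent_le_rot hi2 hiK
    have hCcard : Nat.card (centralizer (K : Set (DihedralGroup (2^k)))) ≤ 2^k := by
      have := Subgroup.card_le_of_le hC
      rwa [cd15_card_rot] at this
    by_cases hKR : K ≤ zpowers (r 1)
    · have hKcard : Nat.card K ≤ 2^k := by
        have := Subgroup.card_le_of_le hKR
        rwa [cd15_card_rot] at this
      refine ⟨by rw [hmeas]; exact Nat.mul_le_mul hKcard hCcard, fun heq => ?_⟩
      rw [hmeas] at heq
      have hKge : 2^k ≤ Nat.card K := by nlinarith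
      exact Subgroup.eq_of_le_of_card_ge hKR (by rw [cd15_card_rot]; exact hKge)
    · obtain ⟨x, hxK, hxR⟩ := SetLike.not_le_iff_exists.mp hKR
      obtain (j | j) := x
      · exact absurd (cd15_mem_rot j) hxR
      have hCset : (centralizer (K : Set (DihedralGroup (2^k))) :
          Set (DihedralGroup (2^k))) ⊆ {r 0, r (((2^(k-1) : ℕ)) : ZMod (2^k))} := by
        intro g hg
        obtain ⟨m, rfl⟩ := cd15_rot_of_mem (hC hg)
        rw [SetLike.mem_coe, mem_centralizer_iff] at hg
        have hcomm := hg (sr j) hxK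
        rw [sr_mul_r, r_mul_sr] at hcomm
        have h5 : j + m = j - m := by injection hcomm
        have h2m : 2 * m = 0 := by linear_combination h5
        rcases cd15_two_torsion (by omega) m h2m with rfl | rfl
        · exact Or.inl rfl
        · exact Or.inr rfl
      have hC2 : Nat.card (centralizer (K : Set (DihedralGroup (2^k)))) ≤ 2 :=
        cd15_card_le_pair _ _ _ hCset
      have hlt : chermakDelgadoMeasure K < 2^k * 2^k := by
        rw [hmeas]
        calc Nat.card K * Nat.card (centralizer (K : Set (DihedralGroup (2^k))))
            ≤ 2 * 2^k * 2 := Nat.mul_le_mul hKtop hC2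
          _ = 2^(k+2) := by ring
          _ < 2^k * 2^k := hkk
      exact ⟨hlt.le, fun h => absurd h hlt.ne⟩
  · push_neg at hA
    have hB : ∀ i : ZMod (2^k), r i ∈ K → 2 * i = 0 := by
      intro i hi
      by_contra h2
      exact hA i h2 hi
    by_cases hKR : K ≤ zpowers (r 1)
    · have hKset : (K : Set (DihedralGroup (2^k))) ⊆
          {r 0, r (((2^(k-1) : ℕ)) : ZMod (2^k))} := by
        intro x hx
        obtain ⟨m, rfl⟩ := cd15_rot_of_mem (hKR hx)
        rcases cd15_two_torsion (by omega) m (hB m hx) with rfl | rfl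
        · exact Or.inl rfl
        · exact Or.inr rfl
      have hK2 : Nat.card K ≤ 2 := cd15_card_le_pair _ _ _ hKset
      have hlt : chermakDelgadoMeasure K < 2^k * 2^k := by
        rw [hmeas]
        calc Nat.card K * Nat.card (centralizer (K : Set (DihedralGroup (2^k))))
            ≤ 2 * (2 * 2^k) := Nat.mul_le_mul hK2 hCtop
          _ = 2^(k+2) := by ring
          _ < 2^k * 2^k := hkk
      exact ⟨hlt.le, fun h => absurd h hlt.ne⟩
    · obtain ⟨x, hxK, hxR⟩ := SetLike.not_le_iff_exists.mp hKR
      obtain (j | j) := x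
      · exact absurd (cd15_mem_rot j) hxR
      have hKset : (K : Set (DihedralGroup (2^k))) ⊆
          {r 0, r (((2^(k-1) : ℕ)) : ZMod (2^k)), sr j,
            sr (j + (((2^(k-1) : ℕ)) : ZMod (2^k)))} := by
        intro x hx
        obtain (m | m) := x
        · rcases cd15_two_torsion (by omega) m (hB m hx) with rfl | rfl
          · exact Or.inl rfl
          · exact Or.inr (Or.inl rfl)
        · have hmul : r (j - m) ∈ K := by
            have := K.mul_mem hx hxK
            rwa [sr_mul_sr] at this
          rcases cd15_two_torsion (by omega) _ (hB _ hmul) with h | h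
          · have hm : m = j := by linear_combination -h
            subst hm
            exact Or.inr (Or.inr (Or.inl rfl))
          · have hm : m = j + (((2^(k-1) : ℕ)) : ZMod (2^k)) := by
              linear_combination -h + hneg
            subst hm
            exact Or.inr (Or.inr (Or.inr rfl))
      have hCset : (centralizer (K : Set (DihedralGroup (2^k))) :
          Set (DihedralGroup (2^k))) ⊆
          {r 0, r (((2^(k-1) : ℕ)) : ZMod (2^k)), sr j,
            sr (j + (((2^(k-1) : ℕ)) : ZMod (2^k)))} := by
        intro g hg
        rw [SetLike.mem_coe, mem_centralizer_iff] at hg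
        have hcomm := hg (sr j) hxK
        obtain (m | m) := g
        · rw [sr_mul_r, r_mul_sr] at hcomm
          have h5 : j + m = j - m := by injection hcomm
          have h2m : 2 * m = 0 := by linear_combination h5
          rcases cd15_two_torsion (by omega) m h2m with rfl | rfl
          · exact Or.inl rfl
          · exact Or.inr (Or.inl rfl)
        · rw [sr_mul_sr, sr_mul_sr] at hcomm
          have h5 : m - j = j - m := by injection hcomm
          have h2m : 2 * (m - j) = 0 := by linear_combination h5
          rcases cd15_two_torsion (by omega) _ h2m with h | h
          · have hm : m = j := by linear_combination h
            subst hm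
            exact Or.inr (Or.inr (Or.inl rfl))
          · have hm : m = j + (((2^(k-1) : ℕ)) : ZMod (2^k)) := by linear_combination h
            subst hm
            exact Or.inr (Or.inr (Or.inr rfl))
      have hK4 : Nat.card K ≤ 4 := cd15_card_le_quad _ _ _ _ _ hKset
      have hC4 : Nat.card (centralizer (K : Set (DihedralGroup (2^k)))) ≤ 4 :=
        cd15_card_le_quad _ _ _ _ _ hCset
      have hlt : chermakDelgadoMeasure K < 2^k * 2^k := by
        rw [hmeas]
        calc Nat.card K * Nat.card (centralizer (K : Set (DihedralGroup (2^k))))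
            ≤ 4 * 4 := Nat.mul_le_mul hK4 hC4
          _ = 16 := by norm_num
          _ < 2^k * 2^k := hkk4
      exact ⟨hlt.le, fun h => absurd h hlt.ne⟩

/-- For `k ≥ 3`, `CD(D_{2^{k+1}}) = {⟨a⟩}`, the cyclic subgroup of order `2^k`. -/
theorem stmt_15 (k : ℕ) (hk : 3 ≤ k) :
    {H : Subgroup (DihedralGroup (2 ^ k)) |
        ∀ K : Subgroup (DihedralGroup (2 ^ k)),
          chermakDelgadoMeasure K ≤ chermakDelgadoMeasure H} =
      {Subgroup.zpowers (DihedralGroup.r 1)} ∧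
    Nat.card (Subgroup.zpowers (DihedralGroup.r (1 : ZMod (2 ^ k)))) = 2 ^ k := by
  have hmR : chermakDelgadoMeasure (zpowers (r (1 : ZMod (2^k)))) = 2^k * 2^k := by
    show Nat.card _ * Nat.card _ = _
    rw [cd15_cent_rot (by omega), cd15_card_rot]
  constructor
  · ext H
    simp only [Set.mem_setOf_eq, Set.mem_singleton_iff]
    constructor
    · intro hH
      have h1 := (cd15_key hk H).1
      have h2 := hH (zpowers (r 1))
      rw [hmR] at h2
      exact (cd15_key hk H).2 (le_antisymm h1 h2)
    · rintro rfl K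
      rw [hmR]
      exact (cd15_key hk K).1
  · exact cd15_card_rot

end CD15b
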